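/- There exists a constant c > 0 such that for all positive integers n and m with m ≤ n, |λ_n − λ_m| ≥ c·(n − m)·n^{1/2}, where λ_n = −i·(n(g + n²)·tanh(hn))^{1/2}. -/

import Mathlib

lemma my_tanh_pos {x : ℝ} (hx : 0 < x) : 0 < Real.tanh x := by
  rw [Real.tanh_eq_sinh_div_cosh]
  exact div_pos (Real.sinh_pos_iff.2 hx) (Real.cosh_pos x)

lemma my_tanh_le_one (x : ℝ) : Real.tanh x ≤ 1 := by
  rw [Real.tanh_eq_sinh_div_cosh, div_le_one (Real.cosh_pos x)]
  nlinarith [Real.cosh_sub_sinh x, Real.exp_pos (-x)]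

lemma my_tanh_mono {x y : ℝ} (hxy : x ≤ y) : Real.tanh x ≤ Real.tanh y := by
  rw [Real.tanh_eq_sinh_div_cosh, Real.tanh_eq_sinh_div_cosh,
    div_le_div_iff₀ (Real.cosh_pos x) (Real.cosh_pos y)]
  have h1 : Real.sinh (x - y) ≤ 0 := Real.sinh_nonpos_iff.2 (by linarith)
  have h2 := Real.sinh_sub x y
  nlinarith

set_option maxHeartbeats 1000000 in
lemma my_gap_key (g h x y : ℝ) (hg : 0 < g) (hh : 0 < h)
    (hx1 : 1 ≤ x) (hy1 : 1 ≤ y) (hyx : y ≤ x) :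
    Real.tanh h / (2 * Real.sqrt (g + 1)) * (x - y) * Real.sqrt x ≤
      Real.sqrt (x * (g + x ^ 2) * Real.tanh (h * x)) -
        Real.sqrt (y * (g + y ^ 2) * Real.tanh (h * y)) := by
  have hg1 : (0:ℝ) < Real.sqrt (g + 1) := Real.sqrt_pos.2 (by linarith)
  have htx : 0 < Real.tanh (h * x) := my_tanh_pos (by nlinarith)
  have hty : 0 < Real.tanh (h * y) := my_tanh_pos (by nlinarith)
  have hfx_pos : 0 < x * (g + x ^ 2) * Real.tanh (h * x) := by positivity
  have hfy_pos : 0 < y * (g + y ^ 2) * Real.tanh (h * y) := by positivity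
  set sx := Real.sqrt (x * (g + x ^ 2) * Real.tanh (h * x)) with hsx
  set sy := Real.sqrt (y * (g + y ^ 2) * Real.tanh (h * y)) with hsy
  have hsx_pos : 0 < sx := Real.sqrt_pos.2 hfx_pos
  have hsy_pos : 0 < sy := Real.sqrt_pos.2 hfy_pos
  have hsq_x : sx ^ 2 = x * (g + x ^ 2) * Real.tanh (h * x) := Real.sq_sqrt hfx_pos.le
  have hsq_y : sy ^ 2 = y * (g + y ^ 2) * Real.tanh (h * y) := Real.sq_sqrt hfy_pos.le
  -- monotonicity pieces
  have h1 : Real.tanh h ≤ Real.tanh (h * y) := my_tanh_mono (by nlinarith)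
  have h2 : Real.tanh (h * y) ≤ Real.tanh (h * x) := my_tanh_mono (by nlinarith)
  have h3 : (x - y) * x ^ 2 ≤ x * (g + x ^ 2) - y * (g + y ^ 2) := by
    nlinarith [mul_nonneg (sub_nonneg.2 hyx) hg.le,
      mul_nonneg (sub_nonneg.2 hyx) (mul_nonneg (by linarith : (0:ℝ) ≤ x) (by linarith : (0:ℝ) ≤ y)),
      mul_nonneg (sub_nonneg.2 hyx) (mul_nonneg (by linarith : (0:ℝ) ≤ y) (by linarith : (0:ℝ) ≤ y))]
  have h4 : 0 ≤ x * (g + x ^ 2) - y * (g + y ^ 2) :=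
    le_trans (by nlinarith) h3
  have hdiff : Real.tanh h * ((x - y) * x ^ 2) ≤ sx ^ 2 - sy ^ 2 := by
    rw [hsq_x, hsq_y]
    have stepA : Real.tanh (h * y) * (x * (g + x ^ 2) - y * (g + y ^ 2)) ≤
        x * (g + x ^ 2) * Real.tanh (h * x) - y * (g + y ^ 2) * Real.tanh (h * y) := by
      nlinarith [mul_nonneg (by positivity : (0:ℝ) ≤ x * (g + x ^ 2)) (sub_nonneg.2 h2)]
    have stepB : Real.tanh h * (x * (g + x ^ 2) - y * (g + y ^ 2)) ≤
        Real.tanh (h * y) * (x * (g + x ^ 2) - y * (g + y ^ 2)) :=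
      mul_le_mul_of_nonneg_right h1 h4
    have stepC : Real.tanh h * ((x - y) * x ^ 2) ≤
        Real.tanh h * (x * (g + x ^ 2) - y * (g + y ^ 2)) :=
      mul_le_mul_of_nonneg_left h3 (my_tanh_pos hh).le
    linarith
  have hsyx : sy ≤ sx := by
    rw [hsx, hsy]
    apply Real.sqrt_le_sqrt
    nlinarith [mul_nonneg (by positivity : (0:ℝ) ≤ x * (g + x ^ 2)) (sub_nonneg.2 h2),
      mul_le_mul_of_nonneg_right h4 hty.le]
  -- upper bound on sx
  have hsqx : Real.sqrt x * Real.sqrt x = x := Real.mul_self_sqrt (by linarith)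
  have hsx_ub : sx ≤ Real.sqrt (g + 1) * (x * Real.sqrt x) := by
    rw [hsx]
    have hb : x * (g + x ^ 2) * Real.tanh (h * x) ≤ (g + 1) * x ^ 3 := by
      have t1 : x * (g + x ^ 2) * Real.tanh (h * x) ≤ x * (g + x ^ 2) * 1 :=
        mul_le_mul_of_nonneg_left (my_tanh_le_one (h * x)) (by positivity)
      have t2 : g + x ^ 2 ≤ (g + 1) * x ^ 2 := by
        nlinarith [mul_nonneg hg.le (by nlinarith : (0:ℝ) ≤ x ^ 2 - 1)]
      have t3 : x * (g + x ^ 2) ≤ x * ((g + 1) * x ^ 2) :=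
        mul_le_mul_of_nonneg_left t2 (by linarith)
      have t4 : x * ((g + 1) * x ^ 2) = (g + 1) * x ^ 3 := by ring
      linarith
    calc Real.sqrt (x * (g + x ^ 2) * Real.tanh (h * x))
        ≤ Real.sqrt ((g + 1) * x ^ 3) := Real.sqrt_le_sqrt hb
      _ = Real.sqrt (g + 1) * (x * Real.sqrt x) := by
          rw [Real.sqrt_mul (by linarith)]
          congr 1
          rw [show x ^ 3 = x ^ 2 * x by ring, Real.sqrt_mul (by positivity),
            Real.sqrt_sq (by linarith)]
  -- reduce to product form
  set c := Real.tanh h / (2 * Real.sqrt (g + 1)) with hc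
  have hcpos : 0 < c := div_pos (my_tanh_pos hh) (by linarith)
  have hcval : c * (2 * Real.sqrt (g + 1)) = Real.tanh h := by
    rw [hc, div_mul_cancel₀ _ (by positivity)]
  have hredux : c * (x - y) * Real.sqrt x ≤ (sx ^ 2 - sy ^ 2) / (sx + sy) := by
    rw [le_div_iff₀ (by positivity)]
    calc c * (x - y) * Real.sqrt x * (sx + sy)
        ≤ c * (x - y) * Real.sqrt x * (2 * (Real.sqrt (g + 1) * (x * Real.sqrt x))) := by
          exact mul_le_mul_of_nonneg_left (by linarith)
            (mul_nonneg (mul_nonneg hcpos.le (sub_nonneg.2 hyx)) (Real.sqrt_nonneg x))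
      _ = Real.tanh h * ((x - y) * x ^ 2) := by
          have hinv : Real.sqrt (g + 1) * (Real.sqrt (g + 1))⁻¹ = 1 :=
            mul_inv_cancel₀ hg1.ne'
          linear_combination (2 * c * Real.sqrt (g + 1) * (x - y) * x) * hsqx
            - (x - y) * x ^ 2 * hcval + 2 * Real.tanh h * (x ^ 3 - x ^ 2 * y) * hinv
      _ ≤ sx ^ 2 - sy ^ 2 := hdiff
  calc c * (x - y) * Real.sqrt x ≤ (sx ^ 2 - sy ^ 2) / (sx + sy) := hredux
    _ = sx - sy := by
        rw [show sx ^ 2 - sy ^ 2 = (sx - sy) * (sx + sy) by ring,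
          mul_div_assoc, div_self (by positivity), mul_one]

/-- Eigenvalue gap bound: for m ≤ n, |λ_n − λ_m| ≥ c·(n − m)·n^{1/2}. -/
theorem stmt1 (g h : ℝ) (hg : 0 < g) (hh : 0 < h)
    (lam : ℕ → ℂ)
    (hlam : ∀ n : ℕ, lam n =
      -Complex.I * Real.sqrt ((n : ℝ) * (g + (n : ℝ) ^ 2) * Real.tanh (h * n))) :
    ∃ c : ℝ, 0 < c ∧ ∀ n m : ℕ, 0 < n → 0 < m → m ≤ n →
      c * ((n : ℝ) - (m : ℝ)) * Real.sqrt n ≤ ‖lam n - lam m‖ := by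
  have hg1 : (0:ℝ) < Real.sqrt (g + 1) := Real.sqrt_pos.2 (by linarith)
  refine ⟨Real.tanh h / (2 * Real.sqrt (g + 1)),
    div_pos (my_tanh_pos hh) (by linarith), ?_⟩
  intro n m hn hm hmn
  have hn1 : (1:ℝ) ≤ (n:ℝ) := by exact_mod_cast hn
  have hm1 : (1:ℝ) ≤ (m:ℝ) := by exact_mod_cast hm
  have hmn' : (m:ℝ) ≤ (n:ℝ) := by exact_mod_cast hmn
  have key := my_gap_key g h (n:ℝ) (m:ℝ) hg hh hn1 hm1 hmn'
  set sn := Real.sqrt ((n:ℝ) * (g + (n:ℝ) ^ 2) * Real.tanh (h * n)) with hsn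
  set sm := Real.sqrt ((m:ℝ) * (g + (m:ℝ) ^ 2) * Real.tanh (h * m)) with hsm
  have habs : ‖lam n - lam m‖ = sn - sm := by
    rw [hlam n, hlam m]
    have heq : -Complex.I * (sn:ℂ) - -Complex.I * (sm:ℂ)
        = -Complex.I * ((sn - sm : ℝ) : ℂ) := by push_cast; ring
    rw [heq, norm_mul, Complex.norm_real]
    have hnn : (0:ℝ) ≤ sn - sm := by
      have := key
      have hsq : 0 ≤ Real.tanh h / (2 * Real.sqrt (g + 1)) * ((n:ℝ) - m) * Real.sqrt n :=
        mul_nonneg (mul_nonneg (div_pos (my_tanh_pos hh) (by linarith)).le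
          (sub_nonneg.2 hmn')) (Real.sqrt_nonneg _)
      linarith
    simp [abs_of_nonneg hnn]
  rw [habs]
  exact key
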